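/- Let X be an A-correspondence, Y a B-correspondence, R an A-B correspondence, S a B-A correspondence with X ≅ R ⊗_B S and Y ≅ S ⊗_A R. Let I = span⟨X,X⟩ and J = span⟨Y,Y⟩. Then IRJ ⊗_J JSI ≅ IXI and JSI ⊗_I IRJ ≅ JYJ as correspondences. Moreover, if X is full (I = A), then JYJ is full as a J-correspondence. -/

import Mathlib

/-! Basic framework: C*-correspondences over (possibly non-unital) C*-algebras,
interior tensor products (characterized by their universal properties),
closed ideals, and unitary isomorphisms of correspondences. -/

noncomputable section

/-- A (non-degenerate) A–B C*-correspondence: a right Hilbert `B`-module `X`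
together with a left action of `A` by adjointable operators. -/
structure Corr (A B : Type) [NonUnitalCStarAlgebra A] [NonUnitalCStarAlgebra B] : Type 1 where
  X : Type
  [grp : NormedAddCommGroup X]
  [nsc : NormedSpace ℂ X]
  [cpl : CompleteSpace X]
  /-- the right action of `B` -/
  sm : X → B → X
  /-- the `B`-valued inner product (linear in the second variable) -/
  ip : X → X → B
  /-- the left action of `A` -/
  φ : A → X → X
  sm_add : ∀ x y b, sm (x + y) b = sm x b + sm y b
  sm_add' : ∀ x b c, sm x (b + c) = sm x b + sm x c
  sm_mul : ∀ x b c, sm (sm x b) c = sm x (b * c)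
  sm_smul : ∀ (t : ℂ) x b, sm (t • x) b = t • sm x b
  sm_smul' : ∀ (t : ℂ) x b, sm x (t • b) = t • sm x b
  ip_add : ∀ x y z, ip x (y + z) = ip x y + ip x z
  ip_smul : ∀ (t : ℂ) x y, ip x (t • y) = t • ip x y
  ip_sm : ∀ x y b, ip x (sm y b) = ip x y * b
  ip_star : ∀ x y, star (ip x y) = ip y x
  ip_pos : ∀ x, ∃ b, ip x x = star b * b
  ip_norm : ∀ x, ‖x‖ ^ 2 = ‖ip x x‖
  φ_add : ∀ a x y, φ a (x + y) = φ a x + φ a y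
  φ_add' : ∀ a b x, φ (a + b) x = φ a x + φ b x
  φ_smul : ∀ a (t : ℂ) x, φ a (t • x) = t • φ a x
  φ_smul' : ∀ (t : ℂ) a x, φ (t • a) x = t • φ a x
  φ_mul : ∀ a b x, φ (a * b) x = φ a (φ b x)
  φ_adj : ∀ a x y, ip (φ a x) y = ip x (φ (star a) y)
  /-- non-degeneracy of the left action -/
  nondeg : closure (Submodule.span ℂ {z | ∃ a x, z = φ a x} : Set X) = Set.univ

attribute [instance] Corr.grp Corr.nsc Corr.cpl

variable {A B C : Type} [NonUnitalCStarAlgebra A] [NonUnitalCStarAlgebra B]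
  [NonUnitalCStarAlgebra C]

/-- `Z.setR I` is the closed submodule `Z·I` of `Z`. -/
def Corr.setR (Z : Corr A B) (I : Set B) : Set Z.X :=
  closure (Submodule.span ℂ {x | ∃ ξ b, b ∈ I ∧ x = Z.sm ξ b} : Set Z.X)

/-- `Z.setL I` is the closed subspace `I·Z` of `Z`. -/
def Corr.setL (Z : Corr A B) (I : Set A) : Set Z.X :=
  closure (Submodule.span ℂ {x | ∃ a ξ, a ∈ I ∧ x = Z.φ a ξ} : Set Z.X)

/-- `Z⁻¹(I) = {a ∈ A : φ_Z(a)Z ⊆ ZI}`. -/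
def Corr.inv (Z : Corr A B) (I : Set B) : Set A := {a | ∀ ξ, Z.φ a ξ ∈ Z.setR I}

/-- The closed ideal of `B` generated by the inner products of `Z`. -/
def Corr.ipSet (Z : Corr A B) : Set B :=
  closure (Submodule.span ℂ {b | ∃ x y, b = Z.ip x y} : Set B)

/-- A generalized compact operator on the underlying Hilbert module of a correspondence:
one that is approximable in operator norm by finite sums of "rank one" operators
`θ_{ξ,η} : z ↦ ξ·⟨η,z⟩`. -/
def Corr.IsCompactOp (Z : Corr A B) (f : Z.X → Z.X) : Prop :=
  ∀ ε > (0 : ℝ), ∃ (n : ℕ) (ξ η : Fin n → Z.X),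
    ∀ z, ‖f z - ∑ i, Z.sm (ξ i) (Z.ip (η i) z)‖ ≤ ε * ‖z‖

/-- A closed (two-sided, automatically self-adjoint) ideal of a C*-algebra, as a set. -/
structure IsCIdeal {B : Type} [NonUnitalCStarAlgebra B] (I : Set B) : Prop where
  isClosed : IsClosed I
  zero_mem : (0 : B) ∈ I
  add_mem : ∀ x y, x ∈ I → y ∈ I → x + y ∈ I
  smul_mem : ∀ (t : ℂ) x, x ∈ I → t • x ∈ I
  mul_left_mem : ∀ b x, x ∈ I → b * x ∈ I
  mul_right_mem : ∀ b x, x ∈ I → x * b ∈ I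

/-- `t : Z₁ × Z₂ → T` exhibits `T` as the interior tensor product `Z₁ ⊗_B Z₂`. -/
structure IsTensor (Z₁ : Corr A B) (Z₂ : Corr B C) (T : Corr A C)
    (t : Z₁.X → Z₂.X → T.X) : Prop where
  add_left : ∀ x x' y, t (x + x') y = t x y + t x' y
  add_right : ∀ x y y', t x (y + y') = t x y + t x y'
  smul_left : ∀ (c : ℂ) x y, t (c • x) y = c • t x y
  balanced : ∀ x b y, t (Z₁.sm x b) y = t x (Z₂.φ b y)
  sm_right : ∀ x y c, t x (Z₂.sm y c) = T.sm (t x y) c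
  act_left : ∀ a x y, T.φ a (t x y) = t (Z₁.φ a x) y
  inner : ∀ x x' y y', T.ip (t x y) (t x' y') = Z₂.ip y (Z₂.φ (Z₁.ip x x') y')
  dense : closure (Submodule.span ℂ {z | ∃ x y, z = t x y} : Set T.X) = Set.univ

/-- `X ≅ Z₁ ⊗ Z₂` (unitary isomorphism with the interior tensor product). -/
def IsTensorProd (Z₁ : Corr A B) (Z₂ : Corr B C) (T : Corr A C) : Prop :=
  ∃ t, IsTensor Z₁ Z₂ T t

/-- A unitary isomorphism of A–B correspondences. -/
def CorrIso (Z W : Corr A B) : Prop :=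
  ∃ u : Z.X → W.X, Function.Surjective u ∧ (∀ x y, u (x + y) = u x + u y) ∧
    (∀ (c : ℂ) x, u (c • x) = c • u x) ∧ (∀ a x, u (Z.φ a x) = W.φ a (u x)) ∧
    (∀ x b, u (Z.sm x b) = W.sm (u x) b) ∧ (∀ x y, W.ip (u x) (u y) = Z.ip x y)

end

noncomputable section

variable {A B : Type} [NonUnitalCStarAlgebra A] [NonUnitalCStarAlgebra B]

/-- The two-sided compression `I·Z·J` of a correspondence by ideals `I`, `J`. -/
def Corr.comp2 (Z : Corr A B) (I : Set A) (J : Set B) : Set Z.X :=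
  closure (Submodule.span ℂ
    {z : Z.X | ∃ a ξ b, a ∈ I ∧ b ∈ J ∧ z = Z.sm (Z.φ a ξ) b} : Set Z.X)

/-! ### Auxiliary machinery for the proof -/

section CspMachinery

open Unitization

noncomputable instance unitizationPartialOrder (A : Type)
    [NonUnitalCStarAlgebra A] : PartialOrder (Unitization ℂ A) :=
  CStarAlgebra.spectralOrder _

noncomputable instance unitizationStarOrderedRing (A : Type)
    [NonUnitalCStarAlgebra A] : StarOrderedRing (Unitization ℂ A) :=
  CStarAlgebra.spectralOrderedRing _

variable {M N : Type*} [NormedAddCommGroup M] [NormedSpace ℂ M]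
  [NormedAddCommGroup N] [NormedSpace ℂ N]

/-- Closed linear span. -/
def csp (s : Set M) : Set M := closure (Submodule.span ℂ s : Set M)

lemma isClosed_csp (s : Set M) : IsClosed (csp s) := isClosed_closure

lemma subset_csp (s : Set M) : s ⊆ csp s :=
  fun _ h => subset_closure (Submodule.subset_span h)

lemma csp_eq_topClosure (s : Set M) :
    csp s = ((Submodule.span ℂ s).topologicalClosure : Set M) := by
  simp [csp, Submodule.topologicalClosure_coe]

lemma csp_sub {s t : Set M} (h : s ⊆ csp t) : csp s ⊆ csp t := by
  rw [csp_eq_topClosure t] at h ⊢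
  exact closure_minimal (Submodule.span_le.mpr h)
    (Submodule.isClosed_topologicalClosure _)

lemma csp_map {f : M → N} (hadd : ∀ x y, f (x + y) = f x + f y)
    (hsmul : ∀ (c : ℂ) (x), ∃ c' : ℂ, f (c • x) = c' • f x) (hcont : Continuous f)
    {s : Set M} {t : Set N} (hgen : ∀ x ∈ s, f x ∈ csp t) :
    ∀ x ∈ csp s, f x ∈ csp t := by
  have h0 : f 0 = 0 := by
    have h := hadd 0 0
    rw [add_zero] at h
    exact (left_eq_add.mp h)
  have hT : ∀ y ∈ Submodule.span ℂ s, f y ∈ (Submodule.span ℂ t).topologicalClosure := by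
    intro y hy
    induction hy using Submodule.span_induction with
    | mem z hz => rw [← SetLike.mem_coe, ← csp_eq_topClosure]; exact hgen z hz
    | zero => rw [h0]; exact zero_mem _
    | add x y _ _ ihx ihy => rw [hadd]; exact add_mem ihx ihy
    | smul c x _ ih =>
        obtain ⟨c', hc⟩ := hsmul c x
        rw [hc]; exact Submodule.smul_mem _ _ ih
  intro x hx
  have h1 : f x ∈ closure (f '' (Submodule.span ℂ s : Set M)) :=
    image_closure_subset_closure_image hcont (Set.mem_image_of_mem f hx)
  have h2 : f '' (Submodule.span ℂ s : Set M)
      ⊆ ((Submodule.span ℂ t).topologicalClosure : Set N) := by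
    rintro - ⟨y, hy, rfl⟩
    exact hT y hy
  rw [csp_eq_topClosure]
  exact closure_minimal h2 (Submodule.isClosed_topologicalClosure _) h1

lemma cont_of_bound {f : M → N} (hadd : ∀ x y, f (x + y) = f x + f y)
    (hneg : ∀ x, f (-x) = - f x) {C : ℝ} (hC0 : 0 ≤ C)
    (hC : ∀ x, ‖f x‖ ≤ C * ‖x‖) : Continuous f := by
  have key : ∀ x y, dist (f x) (f y) ≤ C.toNNReal * dist x y := by
    intro x y
    have h1 : f x - f y = f (x - y) := by
      rw [sub_eq_add_neg, sub_eq_add_neg, hadd, hneg]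
    rw [dist_eq_norm, dist_eq_norm, h1]
    calc ‖f (x - y)‖ ≤ C * ‖x - y‖ := hC _
    _ = C.toNNReal * ‖x - y‖ := by rw [Real.coe_toNNReal C hC0]
  exact (LipschitzWith.of_dist_le_mul key).continuous

end CspMachinery

/-! ### Basic algebraic consequences of the `Corr` axioms -/

namespace Corr

variable {A B : Type} [NonUnitalCStarAlgebra A] [NonUnitalCStarAlgebra B]
variable (Z : Corr A B)

lemma sm_zero (x : Z.X) : Z.sm x 0 = 0 := by
  have h := Z.sm_add' x 0 0
  rw [add_zero] at h
  exact (left_eq_add.mp h)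

lemma zero_sm (b : B) : Z.sm 0 b = 0 := by
  have h := Z.sm_add 0 0 b
  rw [add_zero] at h
  exact (left_eq_add.mp h)

lemma φ_zero (x : Z.X) : Z.φ 0 x = 0 := by
  have h := Z.φ_add' 0 0 x
  rw [add_zero] at h
  exact (left_eq_add.mp h)

lemma φ_zero' (a : A) : Z.φ a 0 = 0 := by
  have h := Z.φ_add a 0 0
  rw [add_zero] at h
  exact (left_eq_add.mp h)

lemma ip_zero_right (x : Z.X) : Z.ip x 0 = 0 := by
  have h := Z.ip_add x 0 0
  rw [add_zero] at h
  exact (left_eq_add.mp h)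

lemma ip_zero_left (y : Z.X) : Z.ip 0 y = 0 := by
  rw [← Z.ip_star, Z.ip_zero_right, star_zero]

lemma ip_add_left (x y z : Z.X) : Z.ip (x + y) z = Z.ip x z + Z.ip y z := by
  rw [← Z.ip_star, Z.ip_add, star_add, Z.ip_star, Z.ip_star]

lemma ip_smul_left (c : ℂ) (x y : Z.X) : Z.ip (c • x) y = (star c) • Z.ip x y := by
  rw [← Z.ip_star, Z.ip_smul, star_smul, Z.ip_star]

lemma ip_sm_left (x y : Z.X) (b : B) : Z.ip (Z.sm x b) y = star b * Z.ip x y := by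
  rw [← Z.ip_star, Z.ip_sm, star_mul, Z.ip_star]

lemma ip_neg_right (x y : Z.X) : Z.ip x (-y) = - Z.ip x y := by
  rw [← neg_one_smul ℂ y, Z.ip_smul, neg_one_smul]

lemma ip_neg_left (x y : Z.X) : Z.ip (-x) y = - Z.ip x y := by
  rw [← neg_one_smul ℂ x, Z.ip_smul_left, star_neg, star_one, neg_one_smul]

lemma ip_sub_right (x y z : Z.X) : Z.ip x (y - z) = Z.ip x y - Z.ip x z := by
  rw [sub_eq_add_neg, Z.ip_add, Z.ip_neg_right, sub_eq_add_neg]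

lemma norm_ip_self (x : Z.X) : ‖Z.ip x x‖ = ‖x‖ ^ 2 := (Z.ip_norm x).symm

lemma eq_zero_of_ip_self {x : Z.X} (h : Z.ip x x = 0) : x = 0 := by
  have h2 : ‖x‖ ^ 2 = 0 := by rw [Z.ip_norm, h, norm_zero]
  have : ‖x‖ = 0 := by nlinarith [norm_nonneg x]
  exact norm_eq_zero.mp this

lemma ext_ip {z w : Z.X} (h : ∀ y, Z.ip y z = Z.ip y w) : z = w := by
  have h1 : Z.ip (z - w) (z - w) = 0 := by
    rw [sub_eq_add_neg, Z.ip_add, Z.ip_neg_right]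
    have := h (z + -w)
    rw [this]; exact add_neg_cancel _
  have := Z.eq_zero_of_ip_self h1
  rwa [sub_eq_zero] at this

lemma ip_adj' (a : A) (x y : Z.X) : Z.ip y (Z.φ a x) = Z.ip (Z.φ (star a) y) x := by
  rw [Z.φ_adj, star_star]

lemma φ_sm (a : A) (x : Z.X) (b : B) : Z.φ a (Z.sm x b) = Z.sm (Z.φ a x) b := by
  apply Z.ext_ip
  intro y
  rw [Z.ip_adj', Z.ip_sm, Z.ip_sm, ← Z.ip_adj']

lemma mul_ip (b : B) (x y : Z.X) : b * Z.ip x y = Z.ip (Z.sm x (star b)) y := by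
  rw [Z.ip_sm_left, star_star]

lemma norm_sm_le (x : Z.X) (b : B) : ‖Z.sm x b‖ ≤ ‖x‖ * ‖b‖ := by
  have h1 : ‖Z.sm x b‖ ^ 2 = ‖star b * Z.ip x x * b‖ := by
    rw [Z.ip_norm, Z.ip_sm, Z.ip_sm_left]
  have h2 : ‖star b * Z.ip x x * b‖ ≤ ‖b‖ * (‖x‖ ^ 2) * ‖b‖ := by
    calc ‖star b * Z.ip x x * b‖ ≤ ‖star b * Z.ip x x‖ * ‖b‖ := norm_mul_le _ _
    _ ≤ ‖star b‖ * ‖Z.ip x x‖ * ‖b‖ := by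
        gcongr; exact norm_mul_le _ _
    _ = ‖b‖ * (‖x‖ ^ 2) * ‖b‖ := by rw [norm_star, Z.norm_ip_self]
  nlinarith [norm_nonneg (Z.sm x b), norm_nonneg x, norm_nonneg b,
    mul_nonneg (norm_nonneg x) (norm_nonneg b)]

end Corr


/-! ### Analytic core: approximation lemmas and norm bounds -/

section Analytic

open Unitization

theorem key_approx {B : Type} [NonUnitalCStarAlgebra B] (c : B) (hc : ∃ v, c = star v * v)
    {ε : ℝ} (hε : 0 < ε) :
    ∃ g : B, (∃ h : B, g = c * h) ∧ IsSelfAdjoint g ∧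
      ‖c - g * c - c * g + g * c * g‖ ≤ ε := by
  have hsa : IsSelfAdjoint c := by obtain ⟨v, rfl⟩ := hc; exact IsSelfAdjoint.star_mul_self v
  have hspec : ∀ s ∈ quasispectrum ℝ c, 0 ≤ s := by
    intro s hs
    rw [Unitization.quasispectrum_eq_spectrum_inr' ℝ ℂ c] at hs
    have h0 : (0 : Unitization ℂ B) ≤ (c : Unitization ℂ B) := by
      obtain ⟨v, rfl⟩ := hc
      rw [Unitization.inr_mul, Unitization.inr_star]
      exact star_mul_self_nonneg _
    exact spectrum_nonneg_of_nonneg h0 hs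
  have hmax : ∀ s : ℝ, max ε s ≠ 0 := fun s => ne_of_gt (lt_of_lt_of_le hε (le_max_left _ _))
  set m : ℝ → ℝ := fun s => s * ((max ε s)⁻¹ ^ 2) with hm
  have hmc : Continuous m :=
    continuous_id.mul (((continuous_const.max continuous_id).inv₀ hmax).pow 2)
  have hm0 : m 0 = 0 := by simp [hm]
  set r : ℝ → ℝ := fun s => s * m s with hrdef
  have hrc : Continuous r := continuous_id.mul hmc
  have hr0 : r 0 = 0 := by simp [hrdef, hm0]
  set g := cfcₙ r c with hg
  have hgc : g = c * cfcₙ m c := by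
    have h1 := cfcₙ_mul (id : ℝ → ℝ) m c continuousOn_id rfl hmc.continuousOn hm0
    rw [cfcₙ_id ℝ c] at h1
    rw [hg, hrdef]
    exact h1
  have hgsa : IsSelfAdjoint g := cfcₙ_predicate r c
  refine ⟨g, ⟨cfcₙ m c, hgc⟩, hgsa, ?_⟩
  have e1 : cfcₙ (fun s => r s * s) c = g * c := by
    have := cfcₙ_mul r (id : ℝ → ℝ) c hrc.continuousOn hr0 continuousOn_id rfl
    rw [cfcₙ_id ℝ c] at this
    exact this
  have e2 : cfcₙ (fun s => s * r s) c = c * g := by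
    have := cfcₙ_mul (id : ℝ → ℝ) r c continuousOn_id rfl hrc.continuousOn hr0
    rw [cfcₙ_id ℝ c] at this
    exact this
  have e3 : cfcₙ (fun s => s * r s * r s) c = c * g * g := by
    have := cfcₙ_mul (fun s => s * r s) r c
      (continuous_id.mul hrc).continuousOn (by simp [hr0]) hrc.continuousOn hr0
    rw [e2] at this
    exact this
  have e4 : cfcₙ (fun s => s - r s * s) c = c - g * c := by
    have := cfcₙ_sub (id : ℝ → ℝ) (fun s => r s * s) c
      continuousOn_id rfl (hrc.mul continuous_id).continuousOn (by simp [hr0])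
    rw [cfcₙ_id ℝ c, e1] at this
    exact this
  have e5 : cfcₙ (fun s => (s - r s * s) - s * r s) c = c - g * c - c * g := by
    have := cfcₙ_sub (fun s => s - r s * s) (fun s => s * r s) c
      (continuous_id.sub (hrc.mul continuous_id)).continuousOn (by simp [hr0])
      (continuous_id.mul hrc).continuousOn (by simp [hr0])
    rw [e4, e2] at this
    exact this
  have e6 : cfcₙ (fun s => ((s - r s * s) - s * r s) + s * r s * r s) c
      = c - g * c - c * g + g * c * g := by
    have := cfcₙ_add (fun s => (s - r s * s) - s * r s) (fun s => s * r s * r s) c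
      ((continuous_id.sub (hrc.mul continuous_id)).sub (continuous_id.mul hrc)).continuousOn
      (by simp [hr0]) ((continuous_id.mul hrc).mul hrc).continuousOn (by simp [hr0])
    rw [e5, e3] at this
    rw [this]
    have hcomm : g * c = c * g := by
      rw [← e1, ← e2]
      congr 1
      ext s
      ring
    rw [← hcomm, mul_assoc]
  rw [← e6]
  apply norm_cfcₙ_le
  intro s hs
  have hs0 : 0 ≤ s := hspec s hs
  have harr : ((s - r s * s) - s * r s) + s * r s * r s = s * (1 - r s) ^ 2 := by ring
  rw [harr, Real.norm_eq_abs]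
  have hrval : r s = s ^ 2 * ((max ε s)⁻¹) ^ 2 := by
    show s * (s * (max ε s)⁻¹ ^ 2) = _
    ring
  have hr1 : 0 ≤ r s := by rw [hrval]; positivity
  rcases le_or_gt s ε with hcase | hcase
  · have hmaxeq : max ε s = ε := max_eq_left hcase
    have hr2 : r s ≤ 1 := by
      rw [hrval, hmaxeq]
      have h1 : s ^ 2 ≤ ε ^ 2 := by nlinarith
      have h2 : s ^ 2 * (ε⁻¹) ^ 2 ≤ ε ^ 2 * (ε⁻¹) ^ 2 := by nlinarith [sq_nonneg ε⁻¹]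
      have h3 : ε ^ 2 * (ε⁻¹) ^ 2 = 1 := by field_simp
      linarith
    rw [abs_of_nonneg (by positivity)]
    have h10 : 0 ≤ 1 - r s := by linarith
    have h11 : (1 - r s) ^ 2 ≤ 1 := by
      rw [pow_two]
      calc (1 - r s) * (1 - r s) ≤ 1 * 1 :=
        mul_le_mul (by linarith) (by linarith) h10 zero_le_one
      _ = 1 := one_mul 1
    calc s * (1 - r s) ^ 2 ≤ s * 1 := mul_le_mul_of_nonneg_left h11 hs0
    _ ≤ ε := by linarith
  · have hmaxeq : max ε s = s := max_eq_right hcase.le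
    have hs' : s ≠ 0 := ne_of_gt (lt_trans hε hcase)
    have hrs : r s = 1 := by
      rw [hrval, hmaxeq]
      field_simp
    rw [hrs]
    simp [hε.le]

lemma ip_sub_sub {A B : Type} [NonUnitalCStarAlgebra A] [NonUnitalCStarAlgebra B]
    (Z : Corr A B) (u w : Z.X) :
    Z.ip (u - w) (u - w) = Z.ip u u - Z.ip u w - Z.ip w u + Z.ip w w := by
  rw [sub_eq_add_neg, Z.ip_add, Z.ip_add_left, Z.ip_add_left, Z.ip_neg_left, Z.ip_neg_right,
    Z.ip_neg_left, Z.ip_neg_right, neg_neg]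
  abel

theorem Corr.approx_sm {A B : Type} [NonUnitalCStarAlgebra A] [NonUnitalCStarAlgebra B]
    (Z : Corr A B) (z : Z.X) {ε : ℝ} (hε : 0 < ε) :
    ∃ g : B, (∃ h, g = Z.ip z z * h) ∧ ‖z - Z.sm z g‖ ≤ ε := by
  obtain ⟨g, hfac, hgsa, hbound⟩ := key_approx (Z.ip z z) (Z.ip_pos z) (mul_pos hε hε)
  refine ⟨g, hfac, ?_⟩
  have h1 : Z.ip z (Z.sm z g) = Z.ip z z * g := Z.ip_sm _ _ _
  have h2 : Z.ip (Z.sm z g) z = g * Z.ip z z := by rw [Z.ip_sm_left, hgsa.star_eq]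
  have h3 : Z.ip (Z.sm z g) (Z.sm z g) = g * Z.ip z z * g := by
    rw [Z.ip_sm, Z.ip_sm_left, hgsa.star_eq]
  have hexp : Z.ip (z - Z.sm z g) (z - Z.sm z g)
      = Z.ip z z - g * Z.ip z z - Z.ip z z * g + g * Z.ip z z * g := by
    rw [ip_sub_sub, h1, h2, h3]
    abel
  have hsq : ‖z - Z.sm z g‖ ^ 2 ≤ ε * ε := by
    rw [Z.ip_norm, hexp]
    calc ‖Z.ip z z - g * Z.ip z z - Z.ip z z * g + g * Z.ip z z * g‖
        = ‖Z.ip z z - g * Z.ip z z - Z.ip z z * g + g * Z.ip z z * g‖ := rfl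
    _ ≤ ε * ε := hbound
  nlinarith [norm_nonneg (z - Z.sm z g)]

theorem cstar_factor_approx {B : Type} [NonUnitalCStarAlgebra B] (a : B) {ε : ℝ} (hε : 0 < ε) :
    ∃ g : B, (∃ h, g = (star a * a) * h) ∧ IsSelfAdjoint g ∧ ‖a - a * g‖ ≤ ε := by
  obtain ⟨g, hfac, hgsa, hbound⟩ := key_approx (star a * a) ⟨a, rfl⟩ (mul_pos hε hε)
  refine ⟨g, hfac, hgsa, ?_⟩
  have hexp : star (a - a * g) * (a - a * g)
      = (star a * a) - g * (star a * a) - (star a * a) * g + g * (star a * a) * g := by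
    rw [star_sub, star_mul, hgsa.star_eq]
    noncomm_ring
  have hsq : ‖a - a * g‖ ^ 2 ≤ ε * ε := by
    rw [pow_two, ← CStarRing.norm_star_mul_self, hexp]
    exact hbound
  nlinarith [norm_nonneg (a - a * g)]

end Analytic


section NormBounds

open Unitization

lemma rsmul_nonneg {B : Type} [NonUnitalCStarAlgebra B] {p : Unitization ℂ B} (hp : 0 ≤ p)
    {t : ℝ} (ht : 0 ≤ t) : 0 ≤ t • p := by
  have hs : IsSelfAdjoint (CFC.sqrt p) := IsSelfAdjoint.of_nonneg (CFC.sqrt_nonneg p)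
  have h1 : star (Real.sqrt t • CFC.sqrt p) * (Real.sqrt t • CFC.sqrt p) = t • p := by
    rw [star_smul, star_trivial, hs.star_eq, smul_mul_smul_comm,
      Real.mul_self_sqrt ht, CFC.sqrt_mul_sqrt_self p hp]
  rw [← h1]
  exact star_mul_self_nonneg _

lemma rsmul_mono {B : Type} [NonUnitalCStarAlgebra B] {p q : Unitization ℂ B} (hpq : p ≤ q)
    {t : ℝ} (ht : 0 ≤ t) : t • p ≤ t • q := by
  have h := rsmul_nonneg (sub_nonneg.mpr hpq) ht
  rw [smul_sub] at h
  exact sub_nonneg.mp h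

theorem Corr.norm_φ_le {A B : Type} [NonUnitalCStarAlgebra A] [NonUnitalCStarAlgebra B]
    (Z : Corr A B) (a : A) (x : Z.X) : ‖Z.φ a x‖ ≤ ‖a‖ * ‖x‖ := by
  set F : Unitization ℂ A → Unitization ℂ B :=
    fun w => ((Z.ip x (Z.φ w.snd x) : B) : Unitization ℂ B)
      + w.fst • ((Z.ip x x : B) : Unitization ℂ B) with hF
  have hFadd : ∀ v w, F (v + w) = F v + F w := by
    intro v w
    simp only [hF, Unitization.fst_add, Unitization.snd_add, Z.φ_add', Z.ip_add,
      Unitization.inr_add, add_smul]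
    abel
  have hFsq : ∀ s : Unitization ℂ A, ∃ w : Z.X,
      F (star s * s) = ((Z.ip w w : B) : Unitization ℂ B) := by
    intro s
    refine ⟨s.fst • x + Z.φ s.snd x, ?_⟩
    have h1 : (star s * s).snd = star s.fst • s.snd + s.fst • star s.snd
        + star s.snd * s.snd := by
      simp [Unitization.snd_mul, Unitization.fst_star, Unitization.snd_star]
    have h2 : (star s * s).fst = star s.fst * s.fst := by
      simp [Unitization.fst_mul, Unitization.fst_star]
    have hL : F (star s * s) = star s.fst • ((Z.ip x (Z.φ s.snd x) : B) : Unitization ℂ B)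
        + s.fst • ((Z.ip x (Z.φ (star s.snd) x) : B) : Unitization ℂ B)
        + ((Z.ip x (Z.φ (star s.snd * s.snd) x) : B) : Unitization ℂ B)
        + (star s.fst * s.fst) • ((Z.ip x x : B) : Unitization ℂ B) := by
      rw [hF]
      simp only [h1, h2, Z.φ_add', Z.φ_smul', Z.ip_add, Z.ip_smul, Unitization.inr_add,
        Unitization.inr_smul]
    have hR : Z.ip (s.fst • x + Z.φ s.snd x) (s.fst • x + Z.φ s.snd x)
        = star s.fst • (s.fst • Z.ip x x)
          + star s.fst • Z.ip x (Z.φ s.snd x)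
          + s.fst • Z.ip x (Z.φ (star s.snd) x)
          + Z.ip x (Z.φ (star s.snd * s.snd) x) := by
      rw [Z.ip_add, Z.ip_add_left, Z.ip_add_left, Z.ip_smul_left, Z.ip_smul_left,
        Z.ip_smul, Z.ip_smul]
      simp only [Z.φ_adj, Z.φ_mul]
      abel
    rw [hL, hR]
    simp only [Unitization.inr_add, Unitization.inr_smul, smul_smul]
    abel
  have hFpos : ∀ p ∈ AddSubmonoid.closure (Set.range fun s : Unitization ℂ A => star s * s),
      0 ≤ F p := by
    intro p hp
    refine AddSubmonoid.closure_induction ?_ ?_ ?_ hp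
    · rintro q ⟨s, rfl⟩
      obtain ⟨w, hw⟩ := hFsq s
      rw [hw]
      obtain ⟨b, hb⟩ := Z.ip_pos w
      rw [hb, Unitization.inr_mul, Unitization.inr_star]
      exact star_mul_self_nonneg _
    · have hF0 : F 0 = 0 := by
        simp [hF, Z.φ_zero, Z.ip_zero_right]
      rw [hF0]
    · intro p q _ _ hp' hq'
      rw [hFadd]
      exact add_nonneg hp' hq'
  have h1 : star (a : Unitization ℂ A) * (a : Unitization ℂ A)
      ≤ algebraMap ℝ (Unitization ℂ A) (‖a‖ ^ 2) := by
    have h := IsSelfAdjoint.le_algebraMap_norm_self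
      (a := star (a : Unitization ℂ A) * (a : Unitization ℂ A))
      (IsSelfAdjoint.star_mul_self _)
    rwa [CStarRing.norm_star_mul_self, Unitization.norm_inr, ← pow_two] at h
  obtain ⟨p, hp, hsum⟩ := (StarOrderedRing.le_iff _ _).mp h1
  have hFa : F (star (a : Unitization ℂ A) * (a : Unitization ℂ A))
      = ((Z.ip (Z.φ a x) (Z.φ a x) : B) : Unitization ℂ B) := by
    have hs2 : (star (a : Unitization ℂ A) * (a : Unitization ℂ A)).snd = star a * a := by
      simp [Unitization.snd_mul, Unitization.fst_star, Unitization.snd_star,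
        Unitization.fst_inr, Unitization.snd_inr]
    have hs3 : (star (a : Unitization ℂ A) * (a : Unitization ℂ A)).fst = 0 := by
      simp [Unitization.fst_mul, Unitization.fst_star, Unitization.fst_inr]
    rw [hF]
    simp only [hs2, hs3, zero_smul, add_zero]
    rw [Z.φ_mul, ← Z.φ_adj]
  have hFalg : F (algebraMap ℝ (Unitization ℂ A) (‖a‖ ^ 2))
      = ((‖a‖ ^ 2 : ℝ)) • ((Z.ip x x : B) : Unitization ℂ B) := by
    rw [Algebra.algebraMap_eq_smul_one, hF]
    simp only [Unitization.fst_smul, Unitization.snd_smul, Unitization.fst_one,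
      Unitization.snd_one, smul_zero, Z.φ_zero, Z.ip_zero_right, Unitization.inr_zero, zero_add]
    rw [smul_assoc, one_smul]
  have hle : ((Z.ip (Z.φ a x) (Z.φ a x) : B) : Unitization ℂ B)
      ≤ (‖a‖ ^ 2 : ℝ) • ((Z.ip x x : B) : Unitization ℂ B) := by
    rw [← hFa, ← hFalg]
    have h2 := congrArg F hsum
    rw [hFadd] at h2
    rw [h2]
    exact le_add_of_nonneg_right (hFpos p hp)
  have hnn : (0 : Unitization ℂ B) ≤ ((Z.ip (Z.φ a x) (Z.φ a x) : B) : Unitization ℂ B) := by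
    obtain ⟨b, hb⟩ := Z.ip_pos (Z.φ a x)
    rw [hb, Unitization.inr_mul, Unitization.inr_star]
    exact star_mul_self_nonneg _
  have hnorm := CStarAlgebra.norm_le_norm_of_nonneg_of_le hnn hle
  rw [Unitization.norm_inr, norm_smul, Unitization.norm_inr, Z.norm_ip_self, Z.norm_ip_self,
    Real.norm_eq_abs, abs_of_nonneg (sq_nonneg _)] at hnorm
  nlinarith [norm_nonneg (Z.φ a x), norm_nonneg a, norm_nonneg x,
    mul_nonneg (norm_nonneg a) (norm_nonneg x)]

theorem Corr.norm_ip_le {A B : Type} [NonUnitalCStarAlgebra A] [NonUnitalCStarAlgebra B]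
    (Z : Corr A B) (x y : Z.X) : ‖Z.ip x y‖ ≤ ‖x‖ * ‖y‖ := by
  rcases eq_or_ne x 0 with rfl | hx
  · rw [Z.ip_zero_left]; simp
  have hx2 : (0:ℝ) < ‖x‖ := norm_pos_iff.mpr hx
  set c := Z.ip x y with hc
  set T : ℝ := (‖x‖ ^ 2)⁻¹ with hT
  have hT0 : 0 < T := by positivity
  set b := (T : ℂ) • c with hb
  have hstarb : star b = (T : ℂ) • star c := by
    rw [hb, star_smul, Complex.star_def, Complex.conj_ofReal]
  have h1 : Z.ip (Z.sm x b) (Z.sm x b) = (T:ℂ) • ((T:ℂ) • (star c * Z.ip x x * c)) := by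
    rw [Z.ip_sm, Z.ip_sm_left, hstarb, hb, smul_mul_assoc, smul_mul_assoc, mul_smul_comm]
  have h2 : Z.ip (Z.sm x b) y = (T:ℂ) • (star c * c) := by
    rw [Z.ip_sm_left, hstarb, smul_mul_assoc, ← hc]
  have h3 : Z.ip y (Z.sm x b) = (T:ℂ) • (star c * c) := by
    rw [Z.ip_sm, hb, mul_smul_comm]
    congr 1
    rw [← Z.ip_star, ← hc]
  have hE : Z.ip (Z.sm x b - y) (Z.sm x b - y)
      = (T:ℂ) • ((T:ℂ) • (star c * Z.ip x x * c)) - (T:ℂ) • (star c * c)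
        - (T:ℂ) • (star c * c) + Z.ip y y := by
    rw [ip_sub_sub, h1, h2, h3]
  have hpos : (0 : Unitization ℂ B)
      ≤ ((Z.ip (Z.sm x b - y) (Z.sm x b - y) : B) : Unitization ℂ B) := by
    obtain ⟨v, hv⟩ := Z.ip_pos (Z.sm x b - y)
    rw [hv, Unitization.inr_mul, Unitization.inr_star]
    exact star_mul_self_nonneg _
  rw [hE] at hpos
  have hrw : (((T:ℂ) • ((T:ℂ) • (star c * Z.ip x x * c)) - (T:ℂ) • (star c * c)
        - (T:ℂ) • (star c * c) + Z.ip y y : B) : Unitization ℂ B)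
      = T • (T • (star ((c : Unitization ℂ B)) * ((Z.ip x x : B) : Unitization ℂ B)
          * ((c : B) : Unitization ℂ B)))
        - T • (star ((c : B) : Unitization ℂ B) * ((c : B) : Unitization ℂ B))
        - T • (star ((c : B) : Unitization ℂ B) * ((c : B) : Unitization ℂ B))
        + ((Z.ip y y : B) : Unitization ℂ B) := by
    rw [Unitization.inr_add, Unitization.inr_sub, Unitization.inr_sub]
    simp only [Unitization.inr_smul, Unitization.inr_mul, Unitization.inr_star,
      Complex.coe_smul]
  rw [hrw] at hpos
  set cu : Unitization ℂ B := ((c : B) : Unitization ℂ B) with hcu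
  set Q : Unitization ℂ B := star cu * cu with hQ
  have hQpos : 0 ≤ Q := star_mul_self_nonneg cu
  have hsa : IsSelfAdjoint ((Z.ip x x : B) : Unitization ℂ B) := by
    rw [isSelfAdjoint_iff, ← Unitization.inr_star, Z.ip_star]
  have hconj : star cu * ((Z.ip x x : B) : Unitization ℂ B) * cu
      ≤ ‖((Z.ip x x : B) : Unitization ℂ B)‖ • Q :=
    CStarAlgebra.star_left_conjugate_le_norm_smul hsa
  have hnrm : ‖((Z.ip x x : B) : Unitization ℂ B)‖ = ‖x‖ ^ 2 := by
    rw [Unitization.norm_inr, Z.norm_ip_self]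
  rw [hnrm] at hconj
  have hX : T • (T • (star cu * ((Z.ip x x : B) : Unitization ℂ B) * cu)) ≤ T • Q := by
    have step1 : T • (T • (star cu * ((Z.ip x x : B) : Unitization ℂ B) * cu))
        ≤ T • (T • (‖x‖ ^ 2 • Q)) := rsmul_mono (rsmul_mono hconj hT0.le) hT0.le
    have step2 : T • (T • (‖x‖ ^ 2 • Q)) = T • Q := by
      rw [smul_smul, smul_smul]
      congr 1
      rw [hT]
      field_simp
    rw [step2] at step1
    exact step1
  have hchain : T • (T • (star cu * ((Z.ip x x : B) : Unitization ℂ B) * cu))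
      - T • Q - T • Q + ((Z.ip y y : B) : Unitization ℂ B)
      ≤ T • Q - T • Q - T • Q + ((Z.ip y y : B) : Unitization ℂ B) := by
    have := sub_le_sub_right (sub_le_sub_right hX (T • Q)) (T • Q)
    exact add_le_add this le_rfl
  have hfinal : (0 : Unitization ℂ B)
      ≤ ((Z.ip y y : B) : Unitization ℂ B) - T • Q := by
    have h4 := le_trans hpos hchain
    have h5 : T • Q - T • Q - T • Q + ((Z.ip y y : B) : Unitization ℂ B)
        = ((Z.ip y y : B) : Unitization ℂ B) - T • Q := by abel
    rwa [h5] at h4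
  have hle : T • Q ≤ ((Z.ip y y : B) : Unitization ℂ B) := sub_nonneg.mp hfinal
  have hn := CStarAlgebra.norm_le_norm_of_nonneg_of_le (rsmul_nonneg hQpos hT0.le) hle
  rw [norm_smul, Unitization.norm_inr, Z.norm_ip_self, Real.norm_eq_abs,
    abs_of_nonneg hT0.le] at hn
  have hQn : ‖Q‖ = ‖c‖ * ‖c‖ := by
    rw [hQ, CStarRing.norm_star_mul_self, hcu, Unitization.norm_inr]
  rw [hQn] at hn
  have hTc : T * (‖c‖ * ‖c‖) ≤ ‖y‖ ^ 2 := hn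
  have hc2 : ‖c‖ ^ 2 ≤ ‖x‖ ^ 2 * ‖y‖ ^ 2 := by
    rw [hT] at hTc
    have h6 : ‖c‖ * ‖c‖ ≤ ‖x‖ ^ 2 * ‖y‖ ^ 2 := by
      have h7 := mul_le_mul_of_nonneg_left hTc (le_of_lt (by positivity : (0:ℝ) < ‖x‖ ^ 2))
      rw [← mul_assoc] at h7
      have h8 : ‖x‖ ^ 2 * (‖x‖ ^ 2)⁻¹ = 1 := by field_simp
      rw [h8, one_mul] at h7
      exact h7
    rw [pow_two]
    exact h6
  nlinarith [norm_nonneg c, norm_nonneg y, mul_nonneg (norm_nonneg x) (norm_nonneg y)]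


end NormBounds


/-! ### csp lemmas for correspondences and tensor products -/

section CorrCsp

variable {A B C : Type} [NonUnitalCStarAlgebra A] [NonUnitalCStarAlgebra B]
  [NonUnitalCStarAlgebra C]

lemma Corr.ipSet_eq_csp (Z : Corr A B) : Z.ipSet = csp {b | ∃ x y, b = Z.ip x y} := rfl

lemma Corr.comp2_eq_csp (Z : Corr A B) (I : Set A) (J : Set B) :
    Z.comp2 I J = csp {z : Z.X | ∃ a ξ b, a ∈ I ∧ b ∈ J ∧ z = Z.sm (Z.φ a ξ) b} := rfl

lemma Corr.ip_mem_ipSet (Z : Corr A B) (x y : Z.X) : Z.ip x y ∈ Z.ipSet :=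
  subset_csp _ ⟨x, y, rfl⟩

lemma Corr.ipSet_mul_left (Z : Corr A B) (b : B) {p : B} (hp : p ∈ Z.ipSet) :
    b * p ∈ Z.ipSet := by
  refine csp_map (f := fun q => b * q) (fun q q' => mul_add b q q')
    (fun c q => ⟨c, by simp only [mul_smul_comm]⟩)
    (continuous_mul_left b) ?_ p hp
  rintro - ⟨x, y, rfl⟩
  show b * Z.ip x y ∈ _
  rw [Z.mul_ip]
  exact Z.ip_mem_ipSet _ _

lemma Corr.ipSet_mul_right (Z : Corr A B) {p : B} (hp : p ∈ Z.ipSet) (b : B) :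
    p * b ∈ Z.ipSet := by
  refine csp_map (f := fun q => q * b) (fun q q' => add_mul q q' b)
    (fun c q => ⟨c, smul_mul_assoc c q b⟩)
    (continuous_mul_right b) ?_ p hp
  rintro - ⟨x, y, rfl⟩
  show Z.ip x y * b ∈ _
  rw [← Z.ip_sm]
  exact Z.ip_mem_ipSet _ _

lemma Corr.ipSet_star (Z : Corr A B) {p : B} (hp : p ∈ Z.ipSet) : star p ∈ Z.ipSet := by
  refine csp_map (f := fun q => star q) star_add
    (fun c q => ⟨star c, star_smul c q⟩) continuous_star ?_ p hp
  rintro - ⟨x, y, rfl⟩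
  show star (Z.ip x y) ∈ _
  rw [Z.ip_star]
  exact Z.ip_mem_ipSet _ _

lemma csp_zero {M : Type*} [NormedAddCommGroup M] [NormedSpace ℂ M] :
    csp ({0} : Set M) = {0} := by
  rw [csp, Submodule.span_zero_singleton]
  simp

/-- Extensionality against a dense generating set. -/
lemma Corr.ext_ip_dense (Z : Corr A B) {s : Set Z.X}
    (hd : csp s = Set.univ) {z w : Z.X} (h : ∀ y ∈ s, Z.ip y z = Z.ip y w) : z = w := by
  set f : Z.X → B := fun v => Z.ip v z - Z.ip v w with hf
  have hadd : ∀ v v', f (v + v') = f v + f v' := by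
    intro v v'
    simp only [hf, Z.ip_add_left]
    abel
  have hsmul : ∀ (c : ℂ) v, ∃ c' : ℂ, f (c • v) = c' • f v := by
    intro c v
    refine ⟨star c, ?_⟩
    simp only [hf, Z.ip_smul_left, smul_sub]
  have hcont : Continuous f := by
    refine cont_of_bound hadd ?_ (C := ‖z‖ + ‖w‖)
      (by positivity) ?_
    · intro v
      simp only [hf, Z.ip_neg_left]
      abel
    · intro v
      calc ‖Z.ip v z - Z.ip v w‖ ≤ ‖Z.ip v z‖ + ‖Z.ip v w‖ := norm_sub_le _ _
      _ ≤ ‖v‖ * ‖z‖ + ‖v‖ * ‖w‖ := add_le_add (Z.norm_ip_le v z) (Z.norm_ip_le v w)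
      _ = (‖z‖ + ‖w‖) * ‖v‖ := by ring
  have hvan : ∀ v ∈ csp s, f v ∈ csp ({0} : Set B) := by
    refine csp_map hadd hsmul hcont ?_
    intro v hv
    have : f v = 0 := by simp [hf, h v hv]
    rw [this]
    exact subset_csp _ rfl
  have h0 : f (z - w) = 0 := by
    have := hvan (z - w) (by rw [hd]; trivial)
    rwa [csp_zero, Set.mem_singleton_iff] at this
  have h1 : Z.ip (z - w) z = Z.ip (z - w) w := by
    have := sub_eq_zero.mp h0
    exact this
  have h2 : Z.ip (z - w) (z - w) = 0 := by
    nth_rewrite 2 [sub_eq_add_neg]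
    rw [Z.ip_add, Z.ip_neg_right, h1]
    exact add_neg_cancel _
  have := Z.eq_zero_of_ip_self h2
  rwa [sub_eq_zero] at this

end CorrCsp

/-! ### Tensor product lemmas -/

section TensorLemmas

variable {A B C : Type} [NonUnitalCStarAlgebra A] [NonUnitalCStarAlgebra B]
  [NonUnitalCStarAlgebra C]
variable {Z₁ : Corr A B} {Z₂ : Corr B C} {T : Corr A C} {t : Z₁.X → Z₂.X → T.X}

lemma IsTensor.dense_csp (ht : IsTensor Z₁ Z₂ T t) :
    csp {z : T.X | ∃ x y, z = t x y} = Set.univ := ht.dense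

lemma IsTensor.norm_le (ht : IsTensor Z₁ Z₂ T t) (x : Z₁.X) (y : Z₂.X) :
    ‖t x y‖ ≤ ‖x‖ * ‖y‖ := by
  have h1 : ‖t x y‖ ^ 2 = ‖Z₂.ip y (Z₂.φ (Z₁.ip x x) y)‖ := by
    rw [T.ip_norm, ht.inner]
  have h2 : ‖Z₂.ip y (Z₂.φ (Z₁.ip x x) y)‖ ≤ ‖y‖ * (‖Z₁.ip x x‖ * ‖y‖) := by
    calc ‖Z₂.ip y (Z₂.φ (Z₁.ip x x) y)‖ ≤ ‖y‖ * ‖Z₂.φ (Z₁.ip x x) y‖ := Z₂.norm_ip_le _ _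
    _ ≤ ‖y‖ * (‖Z₁.ip x x‖ * ‖y‖) := by
        have := Z₂.norm_φ_le (Z₁.ip x x) y
        nlinarith [norm_nonneg y]
  have h3 : ‖Z₁.ip x x‖ = ‖x‖ ^ 2 := Z₁.norm_ip_self x
  have h4 : ‖t x y‖ ^ 2 ≤ (‖x‖ * ‖y‖) ^ 2 := by
    rw [h1]
    calc ‖Z₂.ip y (Z₂.φ (Z₁.ip x x) y)‖ ≤ ‖y‖ * (‖Z₁.ip x x‖ * ‖y‖) := h2
    _ = (‖x‖ * ‖y‖) ^ 2 := by rw [h3]; ring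
  nlinarith [norm_nonneg (t x y), mul_nonneg (norm_nonneg x) (norm_nonneg y)]

lemma IsTensor.smul_right (ht : IsTensor Z₁ Z₂ T t) (c : ℂ) (x : Z₁.X) (y : Z₂.X) :
    t x (c • y) = c • t x y := by
  refine T.ext_ip_dense ht.dense_csp ?_
  rintro - ⟨u, v, rfl⟩
  rw [ht.inner, T.ip_smul, ht.inner, Z₂.φ_smul, Z₂.ip_smul]

lemma IsTensor.zero_right (ht : IsTensor Z₁ Z₂ T t) (x : Z₁.X) : t x 0 = 0 := by
  have h := ht.add_right x 0 0
  rw [add_zero] at h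
  exact (left_eq_add.mp h)

lemma IsTensor.zero_left (ht : IsTensor Z₁ Z₂ T t) (y : Z₂.X) : t 0 y = 0 := by
  have h := ht.add_left 0 0 y
  rw [add_zero] at h
  exact (left_eq_add.mp h)

lemma IsTensor.neg_right (ht : IsTensor Z₁ Z₂ T t) (x : Z₁.X) (y : Z₂.X) :
    t x (-y) = - t x y := by
  rw [← neg_one_smul ℂ y, ht.smul_right, neg_one_smul]

lemma IsTensor.neg_left (ht : IsTensor Z₁ Z₂ T t) (x : Z₁.X) (y : Z₂.X) :
    t (-x) y = - t x y := by
  rw [← neg_one_smul ℂ x, ht.smul_left, neg_one_smul]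

lemma IsTensor.sub_left (ht : IsTensor Z₁ Z₂ T t) (x x' : Z₁.X) (y : Z₂.X) :
    t (x - x') y = t x y - t x' y := by
  rw [sub_eq_add_neg, ht.add_left, ht.neg_left, sub_eq_add_neg]

lemma IsTensor.cont_right (ht : IsTensor Z₁ Z₂ T t) (x : Z₁.X) :
    Continuous (fun y => t x y) := by
  refine cont_of_bound (ht.add_right x) (ht.neg_right x) (C := ‖x‖) (norm_nonneg x) ?_
  intro y
  exact ht.norm_le x y

lemma IsTensor.cont_left (ht : IsTensor Z₁ Z₂ T t) (y : Z₂.X) :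
    Continuous (fun x => t x y) := by
  refine cont_of_bound (fun u v => ht.add_left u v y) (fun u => ht.neg_left u y)
    (C := ‖y‖) (norm_nonneg y) ?_
  intro u
  calc ‖t u y‖ ≤ ‖u‖ * ‖y‖ := ht.norm_le u y
  _ = ‖y‖ * ‖u‖ := mul_comm _ _

end TensorLemmas


/-! ### More helper lemmas -/

section MoreHelpers

variable {A B : Type} [NonUnitalCStarAlgebra A] [NonUnitalCStarAlgebra B]

lemma mem_csp_of_approx {M : Type*} [NormedAddCommGroup M] [NormedSpace ℂ M]
    {s : Set M} {w : M} (h : ∀ ε : ℝ, 0 < ε → ∃ v ∈ csp s, ‖w - v‖ ≤ ε) : w ∈ csp s := by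
  have hmem : w ∈ closure (csp s) := by
    rw [Metric.mem_closure_iff]
    intro ε hε
    obtain ⟨v, hv, hd⟩ := h (ε/2) (half_pos hε)
    refine ⟨v, hv, ?_⟩
    rw [dist_eq_norm]
    exact lt_of_le_of_lt hd (by linarith)
  rwa [IsClosed.closure_eq (isClosed_csp s)] at hmem

namespace Corr

variable (Z : Corr A B)

lemma sm_neg_right (x : Z.X) (b : B) : Z.sm x (-b) = - Z.sm x b := by
  rw [← neg_one_smul ℂ b, Z.sm_smul', neg_one_smul]

lemma sm_neg_left (x : Z.X) (b : B) : Z.sm (-x) b = - Z.sm x b := by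
  rw [← neg_one_smul ℂ x, Z.sm_smul, neg_one_smul]

lemma φ_neg_left (a : A) (x : Z.X) : Z.φ (-a) x = - Z.φ a x := by
  rw [← neg_one_smul ℂ a, Z.φ_smul', neg_one_smul]

lemma φ_neg_right (a : A) (x : Z.X) : Z.φ a (-x) = - Z.φ a x := by
  rw [← neg_one_smul ℂ x, Z.φ_smul, neg_one_smul]

lemma φ_sub_left (a a' : A) (x : Z.X) : Z.φ (a - a') x = Z.φ a x - Z.φ a' x := by
  rw [sub_eq_add_neg, Z.φ_add', Z.φ_neg_left, sub_eq_add_neg]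

lemma cont_ip_right (x : Z.X) : Continuous (fun w => Z.ip x w) := by
  refine cont_of_bound (Z.ip_add x) (Z.ip_neg_right x) (C := ‖x‖) (norm_nonneg x) ?_
  intro w
  exact Z.norm_ip_le x w

lemma cont_ip_left (y : Z.X) : Continuous (fun v => Z.ip v y) := by
  refine cont_of_bound (fun v v' => Z.ip_add_left v v' y) (fun v => Z.ip_neg_left v y)
    (C := ‖y‖) (norm_nonneg y) ?_
  intro v
  calc ‖Z.ip v y‖ ≤ ‖v‖ * ‖y‖ := Z.norm_ip_le v y
  _ = ‖y‖ * ‖v‖ := mul_comm _ _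

lemma cont_sm_left (b : B) : Continuous (fun v => Z.sm v b) := by
  refine cont_of_bound (fun v v' => Z.sm_add v v' b) (fun v => Z.sm_neg_left v b)
    (C := ‖b‖) (norm_nonneg b) ?_
  intro v
  calc ‖Z.sm v b‖ ≤ ‖v‖ * ‖b‖ := Z.norm_sm_le v b
  _ = ‖b‖ * ‖v‖ := mul_comm _ _

lemma cont_sm_right (x : Z.X) : Continuous (fun b => Z.sm x b) := by
  refine cont_of_bound (Z.sm_add' x) (Z.sm_neg_right x) (C := ‖x‖) (norm_nonneg x) ?_
  intro b
  exact Z.norm_sm_le x b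

lemma cont_φ_right (a : A) : Continuous (fun v => Z.φ a v) := by
  refine cont_of_bound (Z.φ_add a) (Z.φ_neg_right a) (C := ‖a‖) (norm_nonneg a) ?_
  intro v
  exact Z.norm_φ_le a v

lemma cont_φ_left (x : Z.X) : Continuous (fun a => Z.φ a x) := by
  refine cont_of_bound (fun a a' => Z.φ_add' a a' x) (fun a => Z.φ_neg_left a x)
    (C := ‖x‖) (norm_nonneg x) ?_
  intro a
  calc ‖Z.φ a x‖ ≤ ‖a‖ * ‖x‖ := Z.norm_φ_le a x
  _ = ‖x‖ * ‖a‖ := mul_comm _ _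

/-- Factorization approximation inside the ideal `ipSet`. -/
lemma ideal_approx {p : B} (hp : p ∈ Z.ipSet) {ε : ℝ} (hε : 0 < ε) :
    ∃ j ∈ Z.ipSet, ‖p - p * j‖ ≤ ε := by
  obtain ⟨g, ⟨h, hg⟩, _, hb⟩ := cstar_factor_approx p hε
  refine ⟨g, ?_, hb⟩
  rw [hg]
  exact Z.ipSet_mul_right (Z.ipSet_mul_right (Z.ipSet_star hp) p) h

lemma ideal_approx_left {p : B} (hp : p ∈ Z.ipSet) {ε : ℝ} (hε : 0 < ε) :
    ∃ j ∈ Z.ipSet, ‖p - j * p‖ ≤ ε := by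
  obtain ⟨j, hj, hb⟩ := Z.ideal_approx (Z.ipSet_star hp) hε
  refine ⟨star j, Z.ipSet_star hj, ?_⟩
  have : p - star j * p = star (star p - star p * j) := by
    rw [star_sub, star_star, star_mul, star_star]
  rw [this, norm_star]
  exact hb

lemma ideal_approx₂ {p : B} (hp : p ∈ Z.ipSet) {ε : ℝ} (hε : 0 < ε) :
    ∃ j₁ ∈ Z.ipSet, ∃ j₂ ∈ Z.ipSet, ‖p - j₁ * p * j₂‖ ≤ ε := by
  obtain ⟨j₁, hj₁, hb₁⟩ := Z.ideal_approx_left hp (half_pos hε)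
  have hq : j₁ * p ∈ Z.ipSet := Z.ipSet_mul_left j₁ hp
  obtain ⟨j₂, hj₂, hb₂⟩ := Z.ideal_approx hq (half_pos hε)
  refine ⟨j₁, hj₁, j₂, hj₂, ?_⟩
  calc ‖p - j₁ * p * j₂‖ = ‖(p - j₁ * p) + (j₁ * p - j₁ * p * j₂)‖ := by
        rw [sub_add_sub_cancel]
  _ ≤ ‖p - j₁ * p‖ + ‖j₁ * p - j₁ * p * j₂‖ := norm_add_le _ _
  _ ≤ ε/2 + ε/2 := add_le_add hb₁ hb₂
  _ = ε := by ring

end Corr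

end MoreHelpers


/-! ### Generator sets -/

section GenSets

variable {A B : Type} [NonUnitalCStarAlgebra A] [NonUnitalCStarAlgebra B]

def tpairs {P Q M : Type} (t : P → Q → M) : Set M := {z | ∃ x y, z = t x y}

def ippairs (Z : Corr A B) : Set B := {b | ∃ x y, b = Z.ip x y}

def smset (Z : Corr A B) (J : Set B) : Set Z.X := {x | ∃ ξ b, b ∈ J ∧ x = Z.sm ξ b}

def genC (Z : Corr A B) (I : Set A) (J : Set B) : Set Z.X :=
  {z | ∃ a ξ b, a ∈ I ∧ b ∈ J ∧ z = Z.sm (Z.φ a ξ) b}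

def φpairs (Z : Corr A B) : Set Z.X := {z | ∃ a x, z = Z.φ a x}

lemma ipSet_def (Z : Corr A B) : Z.ipSet = csp (ippairs Z) := rfl

lemma comp2_def (Z : Corr A B) (I : Set A) (J : Set B) :
    Z.comp2 I J = csp (genC Z I J) := rfl

lemma nondeg_csp (Z : Corr A B) : csp (φpairs Z) = Set.univ := Z.nondeg

lemma mem_dense_tpairs {P Q M : Type} [NormedAddCommGroup M] [NormedSpace ℂ M]
    {t : P → Q → M} (hd : csp (tpairs t) = Set.univ) (x : M) : x ∈ csp (tpairs t) := by
  rw [hd]; trivial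

end GenSets

/-! ### Structural lemmas -/

section StructLemmas

variable {A B : Type} [NonUnitalCStarAlgebra A] [NonUnitalCStarAlgebra B]
variable (X : Corr A A) (Y : Corr B B) (R : Corr A B) (S : Corr B A)
variable (t : R.X → S.X → X.X) (u : S.X → R.X → Y.X)

lemma step1 (ht : IsTensor R S X t) (hu : IsTensor S R Y u) :
    ∀ a ∈ X.ipSet, ∀ ρ r : R.X, R.ip ρ (R.φ a r) ∈ Y.ipSet := by
  have base : ∀ (ρ r : R.X) (x x' : X.X), R.ip ρ (R.φ (X.ip x x') r) ∈ Y.ipSet := by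
    intro ρ r x x'
    have inner : ∀ (ρ₁ : R.X) (σ₁ : S.X), ∀ w ∈ csp (tpairs t),
        R.ip ρ (R.φ (X.ip (t ρ₁ σ₁) w) r) ∈ Y.ipSet := by
      intro ρ₁ σ₁
      refine csp_map (f := fun w => R.ip ρ (R.φ (X.ip (t ρ₁ σ₁) w) r)) ?_ ?_ ?_ ?_
      · intro w w'; simp only [X.ip_add, R.φ_add', R.ip_add]
      · intro c w; exact ⟨c, by simp only [X.ip_smul, R.φ_smul', R.ip_smul]⟩
      · exact (R.cont_ip_right ρ).comp ((R.cont_φ_left r).comp (X.cont_ip_right (t ρ₁ σ₁)))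
      · rintro - ⟨ρ₂, σ₂, rfl⟩
        show R.ip ρ (R.φ (X.ip (t ρ₁ σ₁) (t ρ₂ σ₂)) r) ∈ csp (ippairs Y)
        rw [ht.inner, ← hu.inner]
        exact Y.ip_mem_ipSet _ _
    have outer : ∀ v ∈ csp (tpairs t), R.ip ρ (R.φ (X.ip v x') r) ∈ Y.ipSet := by
      refine csp_map (f := fun v => R.ip ρ (R.φ (X.ip v x') r)) ?_ ?_ ?_ ?_
      · intro v v'; simp only [X.ip_add_left, R.φ_add', R.ip_add]
      · intro c v; exact ⟨star c, by simp only [X.ip_smul_left, R.φ_smul', R.ip_smul]⟩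
      · exact (R.cont_ip_right ρ).comp ((R.cont_φ_left r).comp (X.cont_ip_left x'))
      · rintro - ⟨ρ₁, σ₁, rfl⟩
        show R.ip ρ (R.φ (X.ip (t ρ₁ σ₁) x') r) ∈ csp (ippairs Y)
        exact inner ρ₁ σ₁ x' (mem_dense_tpairs ht.dense_csp x')
    exact outer x (mem_dense_tpairs ht.dense_csp x)
  intro a ha ρ r
  refine csp_map (f := fun a => R.ip ρ (R.φ a r)) ?_ ?_ ?_ ?_ a ha
  · intro a₁ a₂; simp only [R.φ_add', R.ip_add]
  · intro c a₁; exact ⟨c, by simp only [R.φ_smul', R.ip_smul]⟩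
  · exact (R.cont_ip_right ρ).comp (R.cont_φ_left r)
  · rintro - ⟨x, x', rfl⟩
    show R.ip ρ (R.φ (X.ip x x') r) ∈ csp (ippairs Y)
    exact base ρ r x x'

lemma lemC2 (ht : IsTensor R S X t) (hu : IsTensor S R Y u) :
    ∀ a ∈ X.ipSet, ∀ r : R.X, R.φ a r ∈ csp (smset R Y.ipSet) := by
  intro a ha r
  have hc : R.ip (R.φ a r) (R.φ a r) ∈ Y.ipSet :=
    step1 X Y R S t u ht hu a ha _ _
  apply mem_csp_of_approx
  intro ε hε
  obtain ⟨g, ⟨h, hg⟩, hb⟩ := R.approx_sm (R.φ a r) hε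
  refine ⟨R.sm (R.φ a r) g, ?_, hb⟩
  have hgJ : g ∈ Y.ipSet := by rw [hg]; exact Y.ipSet_mul_right hc h
  exact subset_csp _ ⟨R.φ a r, g, hgJ, rfl⟩

lemma lemD1 (ht : IsTensor R S X t) (hu : IsTensor S R Y u) :
    ∀ a ∈ X.ipSet, ∀ r : R.X, R.φ a r ∈ csp (genC R X.ipSet Y.ipSet) := by
  intro a ha r
  apply mem_csp_of_approx
  intro ε hε
  have hεr : 0 < ε / (‖r‖ + 1) := by positivity
  obtain ⟨g, ⟨h, hgf⟩, _, hb⟩ := cstar_factor_approx a hεr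
  have hgI : g ∈ X.ipSet := by
    rw [hgf]
    exact X.ipSet_mul_right (X.ipSet_mul_right (X.ipSet_star ha) a) h
  have hmem : R.φ a (R.φ g r) ∈ csp (genC R X.ipSet Y.ipSet) := by
    have hgr : R.φ g r ∈ csp (smset R Y.ipSet) := lemC2 X Y R S t u ht hu g hgI r
    refine csp_map (f := fun v => R.φ a v) (R.φ_add a) (fun c v => ⟨c, R.φ_smul a c v⟩)
      (R.cont_φ_right a) ?_ _ hgr
    rintro - ⟨ξ, b, hbJ, rfl⟩
    show R.φ a (R.sm ξ b) ∈ _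
    rw [R.φ_sm]
    exact subset_csp _ ⟨a, ξ, b, ha, hbJ, rfl⟩
  refine ⟨R.φ a (R.φ g r), hmem, ?_⟩
  have heq : R.φ a r - R.φ a (R.φ g r) = R.φ (a - a * g) r := by
    rw [R.φ_sub_left, R.φ_mul]
  rw [heq]
  calc ‖R.φ (a - a * g) r‖ ≤ ‖a - a * g‖ * ‖r‖ := R.norm_φ_le _ _
  _ ≤ (ε / (‖r‖ + 1)) * ‖r‖ := mul_le_mul_of_nonneg_right hb (norm_nonneg r)
  _ ≤ ε := by
      rw [div_mul_eq_mul_div, div_le_iff₀ (by positivity : (0:ℝ) < ‖r‖ + 1)]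
      nlinarith [norm_nonneg r, hε.le]

end StructLemmas


section MainGoal1

variable {A B : Type} [NonUnitalCStarAlgebra A] [NonUnitalCStarAlgebra B]
variable (X : Corr A A) (Y : Corr B B) (R : Corr A B) (S : Corr B A)
variable (t : R.X → S.X → X.X) (u : S.X → R.X → Y.X)

lemma main1 (ht : IsTensor R S X t) (hu : IsTensor S R Y u) :
    closure (Submodule.span ℂ
        {z : X.X | ∃ r s, r ∈ R.comp2 X.ipSet Y.ipSet ∧ s ∈ S.comp2 Y.ipSet X.ipSet ∧
          z = t r s} : Set X.X)
      = X.comp2 X.ipSet X.ipSet := by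
  show csp _ = _
  set L : Set X.X := {z : X.X | ∃ r s, r ∈ R.comp2 X.ipSet Y.ipSet ∧
    s ∈ S.comp2 Y.ipSet X.ipSet ∧ z = t r s} with hLdef
  apply Set.Subset.antisymm
  · rw [comp2_def]
    apply csp_sub
    rintro - ⟨r, s, hr, hs, rfl⟩
    have inner : ∀ a ∈ X.ipSet, ∀ b ∈ Y.ipSet, ∀ ρ, ∀ s' ∈ csp (genC S Y.ipSet X.ipSet),
        t (R.sm (R.φ a ρ) b) s' ∈ csp (genC X X.ipSet X.ipSet) := by
      intro a ha b hb ρ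
      refine csp_map (f := fun s' => t (R.sm (R.φ a ρ) b) s') (ht.add_right _)
        (fun c s' => ⟨c, ht.smul_right c _ s'⟩) (ht.cont_right _) ?_
      rintro - ⟨b', σ, a', hb', ha', rfl⟩
      show t (R.sm (R.φ a ρ) b) (S.sm (S.φ b' σ) a') ∈ _
      rw [ht.balanced, S.φ_sm, ← S.φ_mul, ht.sm_right, ← ht.act_left]
      exact subset_csp _ ⟨a, t ρ (S.φ (b * b') σ), a', ha, ha', rfl⟩
    have hs' : s ∈ csp (genC S Y.ipSet X.ipSet) := by rw [← comp2_def]; exact hs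
    have hr' : r ∈ csp (genC R X.ipSet Y.ipSet) := by rw [← comp2_def]; exact hr
    refine csp_map (f := fun r' => t r' s) (fun r₁ r₂ => ht.add_left r₁ r₂ s)
      (fun c r' => ⟨c, ht.smul_left c r' s⟩) (ht.cont_left s) ?_ r hr'
    rintro - ⟨a, ρ, b, ha, hb, rfl⟩
    show t (R.sm (R.φ a ρ) b) s ∈ _
    exact inner a ha b hb ρ s hs'
  · rw [comp2_def]
    apply csp_sub
    rintro - ⟨a, ξ, a', ha, ha', rfl⟩
    refine csp_map (f := fun ξ' => X.sm (X.φ a ξ') a') ?_ ?_ ?_ ?_ ξ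
      (mem_dense_tpairs ht.dense_csp ξ)
    · intro v v'; simp only [X.φ_add, X.sm_add]
    · intro c v; exact ⟨c, by simp only [X.φ_smul, X.sm_smul]⟩
    · exact (X.cont_sm_left a').comp (X.cont_φ_right a)
    · rintro - ⟨r, s, rfl⟩
      show X.sm (X.φ a (t r s)) a' ∈ csp L
      rw [ht.act_left, ← ht.sm_right]
      apply mem_csp_of_approx
      intro ε hε
      have hεr : 0 < ε / (‖r‖ * ‖S.sm s a'‖ + 1) := by positivity
      obtain ⟨g, ⟨h, hgf⟩, _, hb⟩ := cstar_factor_approx a hεr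
      have hgI : g ∈ X.ipSet := by
        rw [hgf]
        exact X.ipSet_mul_right (X.ipSet_mul_right (X.ipSet_star ha) a) h
      have hmem : t (R.φ a (R.φ g r)) (S.sm s a') ∈ csp L := by
        have hgr : R.φ g r ∈ csp (smset R Y.ipSet) := lemC2 X Y R S t u ht hu g hgI r
        refine csp_map (f := fun v => t (R.φ a v) (S.sm s a')) ?_ ?_ ?_ ?_ _ hgr
        · intro v v'; simp only [R.φ_add, ht.add_left]
        · intro c v; exact ⟨c, by simp only [R.φ_smul, ht.smul_left]⟩
        · exact (ht.cont_left (S.sm s a')).comp (R.cont_φ_right a)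
        · rintro - ⟨ρ, b, hbJ, rfl⟩
          show t (R.φ a (R.sm ρ b)) (S.sm s a') ∈ csp L
          rw [R.φ_sm, ht.balanced, S.φ_sm]
          refine subset_csp _ ⟨R.φ a ρ, S.sm (S.φ b s) a', ?_, ?_, rfl⟩
          · rw [comp2_def]
            exact lemD1 X Y R S t u ht hu a ha ρ
          · rw [comp2_def]
            exact subset_csp _ ⟨b, s, a', hbJ, ha', rfl⟩
      refine ⟨_, hmem, ?_⟩
      have heq : t (R.φ a r) (S.sm s a') - t (R.φ a (R.φ g r)) (S.sm s a')
          = t (R.φ (a - a * g) r) (S.sm s a') := by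
        rw [R.φ_sub_left, R.φ_mul, ht.sub_left]
      rw [heq]
      calc ‖t (R.φ (a - a * g) r) (S.sm s a')‖
          ≤ ‖R.φ (a - a * g) r‖ * ‖S.sm s a'‖ := ht.norm_le _ _
      _ ≤ (‖a - a * g‖ * ‖r‖) * ‖S.sm s a'‖ :=
            mul_le_mul_of_nonneg_right (R.norm_φ_le _ _) (norm_nonneg _)
      _ ≤ (ε / (‖r‖ * ‖S.sm s a'‖ + 1)) * (‖r‖ * ‖S.sm s a'‖) := by
            rw [mul_assoc]
            exact mul_le_mul_of_nonneg_right hb (by positivity)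
      _ ≤ ε := by
            rw [div_mul_eq_mul_div,
              div_le_iff₀ (by positivity : (0:ℝ) < ‖r‖ * ‖S.sm s a'‖ + 1)]
            nlinarith [mul_nonneg (norm_nonneg r) (norm_nonneg (S.sm s a')), hε.le]

end MainGoal1


section MainGoal3

variable {A B : Type} [NonUnitalCStarAlgebra A] [NonUnitalCStarAlgebra B]
variable (X : Corr A A) (Y : Corr B B) (R : Corr A B) (S : Corr B A)
variable (t : R.X → S.X → X.X) (u : S.X → R.X → Y.X)

/-- The generating set `⟨Y, φ(J)Y⟩`. -/
def genE (Y : Corr B B) : Set B :=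
  {b | ∃ η η' d, d ∈ Y.ipSet ∧ b = Y.ip η (Y.φ d η')}

lemma ipSub (ht : IsTensor R S X t) : X.ipSet ⊆ csp (ippairs S) := by
  apply csp_sub
  rintro - ⟨x, y, rfl⟩
  have inner : ∀ (r₁ : R.X) (σ₁ : S.X), ∀ w ∈ csp (tpairs t),
      X.ip (t r₁ σ₁) w ∈ csp (ippairs S) := by
    intro r₁ σ₁
    refine csp_map (f := fun w => X.ip (t r₁ σ₁) w) (X.ip_add _)
      (fun c w => ⟨c, X.ip_smul c _ w⟩) (X.cont_ip_right _) ?_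
    rintro - ⟨r₂, σ₂, rfl⟩
    show X.ip (t r₁ σ₁) (t r₂ σ₂) ∈ _
    rw [ht.inner]
    exact subset_csp _ ⟨σ₁, _, rfl⟩
  have outer : ∀ v ∈ csp (tpairs t), X.ip v y ∈ csp (ippairs S) := by
    refine csp_map (f := fun v => X.ip v y) (fun v v' => X.ip_add_left v v' y)
      (fun c v => ⟨star c, X.ip_smul_left c v y⟩) (X.cont_ip_left y) ?_
    rintro - ⟨r₁, σ₁, rfl⟩
    show X.ip (t r₁ σ₁) y ∈ _
    exact inner r₁ σ₁ y (mem_dense_tpairs ht.dense_csp y)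
  exact outer x (mem_dense_tpairs ht.dense_csp x)

lemma J0subJ (ht : IsTensor R S X t) (hu : IsTensor S R Y u)
    (hI : X.ipSet = Set.univ) : csp (ippairs R) ⊆ Y.ipSet := by
  apply csp_sub
  rintro - ⟨r, r', rfl⟩
  show R.ip r r' ∈ csp (ippairs Y)
  refine csp_map (f := fun v => R.ip v r') (fun v v' => R.ip_add_left v v' r')
    (fun c v => ⟨star c, R.ip_smul_left c v r'⟩) (R.cont_ip_left r') ?_ r
    (by rw [nondeg_csp]; trivial)
  rintro - ⟨a, ξ, rfl⟩
  show R.ip (R.φ a ξ) r' ∈ csp (ippairs Y)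
  rw [R.φ_adj]
  exact step1 X Y R S t u ht hu (star a) (by rw [hI]; trivial) ξ r'

lemma Elem (ht : IsTensor R S X t) (hu : IsTensor S R Y u)
    (hI : X.ipSet = Set.univ) : Y.ipSet ⊆ csp (genE Y) := by
  have hJJ0 : Y.ipSet ⊆ csp (ippairs R) := ipSub Y S R u hu
  refine subset_trans hJJ0 ?_
  apply csp_sub
  rintro - ⟨r, r', rfl⟩
  show R.ip r r' ∈ csp (genE Y)
  -- map r' over nondegenerate action pairs
  refine csp_map (f := fun v => R.ip r v) (R.ip_add r)
    (fun c v => ⟨c, R.ip_smul c r v⟩) (R.cont_ip_right r) ?_ r'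
    (by rw [nondeg_csp]; trivial)
  rintro - ⟨a, ξ, rfl⟩
  show R.ip r (R.φ a ξ) ∈ csp (genE Y)
  -- a ∈ X.ipSet = univ
  have ha : a ∈ csp (ippairs X) := by
    rw [← ipSet_def, hI]; trivial
  refine csp_map (f := fun a' => R.ip r (R.φ a' ξ)) ?_ ?_ ?_ ?_ a ha
  · intro a₁ a₂; simp only [R.φ_add', R.ip_add]
  · intro c a₁; exact ⟨c, by simp only [R.φ_smul', R.ip_smul]⟩
  · exact (R.cont_ip_right r).comp (R.cont_φ_left ξ)
  · rintro - ⟨x, x', rfl⟩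
    show R.ip r (R.φ (X.ip x x') ξ) ∈ csp (genE Y)
    have inner2 : ∀ (ρ : R.X) (σ : S.X), ∀ w ∈ csp (tpairs t),
        R.ip r (R.φ (X.ip (t ρ σ) w) ξ) ∈ csp (genE Y) := by
      intro ρ σ
      refine csp_map (f := fun w => R.ip r (R.φ (X.ip (t ρ σ) w) ξ)) ?_ ?_ ?_ ?_
      · intro w w'; simp only [X.ip_add, R.φ_add', R.ip_add]
      · intro c w; exact ⟨c, by simp only [X.ip_smul, R.φ_smul', R.ip_smul]⟩
      · exact (R.cont_ip_right r).comp ((R.cont_φ_left ξ).comp (X.cont_ip_right _))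
      · rintro - ⟨ρ', σ', rfl⟩
        show R.ip r (R.φ (X.ip (t ρ σ) (t ρ' σ')) ξ) ∈ csp (genE Y)
        rw [ht.inner, ← hu.inner, ← hu.act_left]
        have hd : R.ip ρ ρ' ∈ Y.ipSet :=
          J0subJ X Y R S t u ht hu hI (subset_csp _ ⟨ρ, ρ', rfl⟩)
        exact subset_csp _ ⟨u σ r, u σ' ξ, R.ip ρ ρ', hd, rfl⟩
    refine csp_map (f := fun v => R.ip r (R.φ (X.ip v x') ξ)) ?_ ?_ ?_ ?_ x
      (mem_dense_tpairs ht.dense_csp x)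
    · intro v v'; simp only [X.ip_add_left, R.φ_add', R.ip_add]
    · intro c v; exact ⟨star c, by simp only [X.ip_smul_left, R.φ_smul', R.ip_smul]⟩
    · exact (R.cont_ip_right r).comp ((R.cont_φ_left ξ).comp (X.cont_ip_left x'))
    · rintro - ⟨ρ, σ, rfl⟩
      show R.ip r (R.φ (X.ip (t ρ σ) x') ξ) ∈ csp (genE Y)
      exact inner2 ρ σ x' (mem_dense_tpairs ht.dense_csp x')

lemma main3 (ht : IsTensor R S X t) (hu : IsTensor S R Y u)
    (hI : X.ipSet = Set.univ) :
    closure (Submodule.span ℂ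
        {b : B | ∃ y y', y ∈ Y.comp2 Y.ipSet Y.ipSet ∧ y' ∈ Y.comp2 Y.ipSet Y.ipSet ∧
          b = Y.ip y y'} : Set B)
      = Y.ipSet := by
  show csp _ = _
  apply Set.Subset.antisymm
  · rw [ipSet_def]
    apply csp_sub
    rintro - ⟨y, y', _, _, rfl⟩
    exact Y.ip_mem_ipSet y y'
  · intro p hp
    apply mem_csp_of_approx
    intro ε hε
    obtain ⟨j₁, hj₁, j₂, hj₂, hb⟩ := Y.ideal_approx₂ hp hε
    refine ⟨j₁ * p * j₂, ?_, hb⟩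
    -- key: j₁ * q * j₂ ∈ csp genF for q ∈ csp (genE Y)
    have hkey : ∀ q ∈ csp (genE Y), j₁ * q * j₂ ∈
        csp {b : B | ∃ y y', y ∈ Y.comp2 Y.ipSet Y.ipSet ∧ y' ∈ Y.comp2 Y.ipSet Y.ipSet ∧
          b = Y.ip y y'} := by
      refine csp_map (f := fun q => j₁ * q * j₂) ?_ ?_ ?_ ?_
      · intro q q'; simp only [mul_add, add_mul]
      · intro c q; exact ⟨c, by simp only [mul_smul_comm, smul_mul_assoc]⟩
      · exact (continuous_mul_right j₂).comp (continuous_mul_left j₁)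
      · rintro - ⟨η, η', d, hd, rfl⟩
        show j₁ * Y.ip η (Y.φ d η') * j₂ ∈ _
        apply mem_csp_of_approx
        intro ε' hε'
        set C : ℝ := ‖j₁‖ * ‖η‖ * ‖η'‖ * ‖j₂‖ with hC
        have hC0 : 0 ≤ C := by positivity
        obtain ⟨j, hj, hbj⟩ := Y.ideal_approx hd
          (show (0:ℝ) < ε' / (C + 1) by positivity)
        refine ⟨j₁ * Y.ip η (Y.φ (d * j) η') * j₂, ?_, ?_⟩
        · have hid : j₁ * Y.ip η (Y.φ (d * j) η') * j₂
              = Y.ip (Y.sm (Y.φ (star d) η) (star j₁)) (Y.sm (Y.φ j η') j₂) := by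
            rw [Y.ip_sm, Y.ip_sm_left, star_star, Y.φ_adj, star_star, ← Y.φ_mul]
          rw [hid]
          refine subset_csp _ ⟨_, _, ?_, ?_, rfl⟩
          · rw [comp2_def]
            exact subset_csp _ ⟨star d, η, star j₁, Y.ipSet_star hd, Y.ipSet_star hj₁, rfl⟩
          · rw [comp2_def]
            exact subset_csp _ ⟨j, η', j₂, hj, hj₂, rfl⟩
        · have heq : j₁ * Y.ip η (Y.φ d η') * j₂ - j₁ * Y.ip η (Y.φ (d * j) η') * j₂
              = j₁ * Y.ip η (Y.φ (d - d * j) η') * j₂ := by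
            rw [Y.φ_sub_left, Y.ip_sub_right, mul_sub, sub_mul]
          rw [heq]
          calc ‖j₁ * Y.ip η (Y.φ (d - d * j) η') * j₂‖
              ≤ ‖j₁ * Y.ip η (Y.φ (d - d * j) η')‖ * ‖j₂‖ := norm_mul_le _ _
          _ ≤ (‖j₁‖ * ‖Y.ip η (Y.φ (d - d * j) η')‖) * ‖j₂‖ :=
              mul_le_mul_of_nonneg_right (norm_mul_le _ _) (norm_nonneg _)
          _ ≤ (‖j₁‖ * (‖η‖ * (‖d - d * j‖ * ‖η'‖))) * ‖j₂‖ := by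
              have h1 : ‖Y.ip η (Y.φ (d - d * j) η')‖ ≤ ‖η‖ * (‖d - d * j‖ * ‖η'‖) := by
                calc ‖Y.ip η (Y.φ (d - d * j) η')‖ ≤ ‖η‖ * ‖Y.φ (d - d * j) η'‖ :=
                      Y.norm_ip_le _ _
                _ ≤ ‖η‖ * (‖d - d * j‖ * ‖η'‖) :=
                      mul_le_mul_of_nonneg_left (Y.norm_φ_le _ _) (norm_nonneg _)
              have h2 : ‖j₁‖ * ‖Y.ip η (Y.φ (d - d * j) η')‖
                  ≤ ‖j₁‖ * (‖η‖ * (‖d - d * j‖ * ‖η'‖)) :=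
                mul_le_mul_of_nonneg_left h1 (norm_nonneg _)
              exact mul_le_mul_of_nonneg_right h2 (norm_nonneg _)
          _ = C * ‖d - d * j‖ := by rw [hC]; ring
          _ ≤ C * (ε' / (C + 1)) := mul_le_mul_of_nonneg_left hbj hC0
          _ ≤ ε' := by
              rw [mul_div_assoc']
              rw [div_le_iff₀ (by positivity : (0:ℝ) < C + 1)]
              nlinarith [hC0, hε'.le]
    exact hkey p (Elem X Y R S t u ht hu hI hp)

end MainGoal3

/-- with `I = span⟨X,X⟩`, `J = span⟨Y,Y⟩`, `X ≅ R ⊗_B S` (via `t`) and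
`Y ≅ S ⊗_A R` (via `u`), the canonical maps give unitary isomorphisms
`IRJ ⊗_J JSI ≅ IXI` and `JSI ⊗_I IRJ ≅ JYJ`; moreover if `X` is full then `JYJ` is a full
`J`-correspondence.

Since the canonical map `r ⊗_J s ↦ r ⊗_B s` is automatically isometric and bimodule-equivariant
(being a restriction of `t`), the isomorphism statement is equivalent to the assertion that the
closed span of `{t r s : r ∈ IRJ, s ∈ JSI}` is exactly `IXI` (and likewise for `Y`);
this is how it is stated here. -/
theorem stmt14 (X : Corr A A) (Y : Corr B B) (R : Corr A B) (S : Corr B A)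
    (t : R.X → S.X → X.X) (ht : IsTensor R S X t)
    (u : S.X → R.X → Y.X) (hu : IsTensor S R Y u) :
    (closure (Submodule.span ℂ
        {z : X.X | ∃ r s, r ∈ R.comp2 X.ipSet Y.ipSet ∧ s ∈ S.comp2 Y.ipSet X.ipSet ∧
          z = t r s} : Set X.X)
      = X.comp2 X.ipSet X.ipSet) ∧
    (closure (Submodule.span ℂ
        {z : Y.X | ∃ s r, s ∈ S.comp2 Y.ipSet X.ipSet ∧ r ∈ R.comp2 X.ipSet Y.ipSet ∧
          z = u s r} : Set Y.X)
      = Y.comp2 Y.ipSet Y.ipSet) ∧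
    (X.ipSet = Set.univ →
      closure (Submodule.span ℂ
        {b : B | ∃ y y', y ∈ Y.comp2 Y.ipSet Y.ipSet ∧ y' ∈ Y.comp2 Y.ipSet Y.ipSet ∧
          b = Y.ip y y'} : Set B)
      = Y.ipSet) := by
  exact ⟨main1 X Y R S t u ht hu, main1 Y X S R u t hu ht,
    fun hI => main3 X Y R S t u ht hu hI⟩
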